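/- The orbital matrices T_0, …, T_r are linearly independent over ℂ; consequently the commutant {f ∈ M_n(ℂ) : P_σ f = f P_σ for all σ ∈ G} is a complex vector space with basis (T_0,…,T_r), of dimension r + 1, the number of orbits of the stabilizer G_0 on {0,…,n−1}. -/

import Mathlib

/-- The orbit of `j` under the stabilizer of `i` in `G`. -/
def stabOrbit {n : ℕ} (G : Subgroup (Equiv.Perm (Fin n))) (i j : Fin n) : Set (Fin n) :=
  {k | ∃ σ ∈ G, σ i = i ∧ σ j = k}

/-- The permutation matrix `P_σ` of a permutation `σ`, characterized by `P_σ e_i = e_{σ i}`. -/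
def permMatrix {n : ℕ} (σ : Equiv.Perm (Fin n)) : Matrix (Fin n) (Fin n) ℂ :=
  Matrix.of fun i j => if i = σ j then 1 else 0

/-- For a transitive subgroup `G` of the symmetric group on `{0,…,n−1}`, with
`O_0^0 = {0}, O_0^1, …, O_0^r` the orbits of the stabilizer `G_0`,
`O_i^s := σ_i(O_0^s)` for chosen `σ_i ∈ G` with `σ_i(0) = i`, and `T_s` the orbital
matrices: the `T_0, …, T_r` are linearly independent over `ℂ`, and the commutant
`{f | P_σ f = f P_σ for all σ ∈ G}` is a complex vector space with basis `(T_0,…,T_r)`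
— i.e. it equals their span — of dimension `r + 1`, the number of orbits of `G_0`. -/
theorem stmt7 {n r : ℕ} [NeZero n]
    (G : Subgroup (Equiv.Perm (Fin n)))
    (htrans : ∀ i j : Fin n, ∃ σ ∈ G, σ i = j)
    (O0 : Fin (r + 1) → Set (Fin n))
    (hO00 : O0 0 = {0})
    (hO0orbit : ∀ s, ∃ j, O0 s = stabOrbit G 0 j)
    (hO0cover : ∀ j : Fin n, ∃ s, stabOrbit G 0 j = O0 s)
    (hO0inj : Function.Injective O0)
    (σ' : Fin n → Equiv.Perm (Fin n))
    (hσ'G : ∀ i, σ' i ∈ G) (hσ'0 : ∀ i, σ' i 0 = i)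
    (O : Fin n → Fin (r + 1) → Set (Fin n))
    (hO : ∀ i s, O i s = ⇑(σ' i) '' O0 s)
    (T : Fin (r + 1) → Matrix (Fin n) (Fin n) ℂ)
    (hT : ∀ s (i j : Fin n), T s i j = (O j s).indicator (fun _ => (1 : ℂ)) i) :
    LinearIndependent ℂ T ∧
      (Submodule.span ℂ (Set.range T) : Set (Matrix (Fin n) (Fin n) ℂ)) =
        {f | ∀ σ ∈ G, permMatrix σ * f = f * permMatrix σ} ∧
      Module.finrank ℂ (Submodule.span ℂ (Set.range T)) = r + 1 ∧
      (Set.range (stabOrbit G 0)).ncard = r + 1 := by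
  classical
  -- basic orbit facts
  have hmem_self : ∀ j : Fin n, j ∈ stabOrbit G 0 j := fun j => ⟨1, G.one_mem, rfl, rfl⟩
  have horb_eq : ∀ j k : Fin n, k ∈ stabOrbit G 0 j → stabOrbit G 0 k = stabOrbit G 0 j := by
    rintro j k ⟨σ, hσG, hσ0, hσj⟩
    have hσ0' : σ⁻¹ 0 = 0 := Equiv.Perm.inv_eq_iff_eq.mpr hσ0.symm
    have hσj' : σ⁻¹ k = j := Equiv.Perm.inv_eq_iff_eq.mpr hσj.symm
    ext x
    constructor
    · rintro ⟨τ, hτG, hτ0, hτk⟩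
      exact ⟨τ * σ, mul_mem hτG hσG,
        by rw [Equiv.Perm.mul_apply, hσ0, hτ0],
        by rw [Equiv.Perm.mul_apply, hσj, hτk]⟩
    · rintro ⟨τ, hτG, hτ0, hτj⟩
      exact ⟨τ * σ⁻¹, mul_mem hτG (inv_mem hσG),
        by rw [Equiv.Perm.mul_apply, hσ0', hτ0],
        by rw [Equiv.Perm.mul_apply, hσj', hτj]⟩
  have huniq : ∀ (x : Fin n) (s t : Fin (r + 1)), x ∈ O0 s → x ∈ O0 t → s = t := by
    intro x s t hs ht
    obtain ⟨js, hjs⟩ := hO0orbit s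
    obtain ⟨jt, hjt⟩ := hO0orbit t
    apply hO0inj
    rw [hjs] at hs
    rw [hjt] at ht
    rw [hjs, hjt, ← horb_eq js x hs, ← horb_eq jt x ht]
  have hcover : ∀ x : Fin n, ∃ s, x ∈ O0 s := by
    intro x
    obtain ⟨s, hs⟩ := hO0cover x
    exact ⟨s, hs ▸ hmem_self x⟩
  -- O0 s is invariant under stabilizer elements
  have hinvar : ∀ g : Equiv.Perm (Fin n), g ∈ G → g 0 = 0 →
      ∀ (s : Fin (r + 1)) (x : Fin n), x ∈ O0 s ↔ g x ∈ O0 s := by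
    have key : ∀ g : Equiv.Perm (Fin n), g ∈ G → g 0 = 0 →
        ∀ (s : Fin (r + 1)) (x : Fin n), x ∈ O0 s → g x ∈ O0 s := by
      intro g hg hg0 s x hx
      obtain ⟨j, hj⟩ := hO0orbit s
      rw [hj] at hx ⊢
      obtain ⟨σ, hσG, hσ0, hσj⟩ := hx
      exact ⟨g * σ, mul_mem hg hσG,
        by rw [Equiv.Perm.mul_apply, hσ0, hg0],
        by rw [Equiv.Perm.mul_apply, hσj]⟩
    intro g hg hg0 s x
    refine ⟨key g hg hg0 s x, fun h => ?_⟩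
    have hg0' : g⁻¹ 0 = 0 := Equiv.Perm.inv_eq_iff_eq.mpr hg0.symm
    simpa using key g⁻¹ (inv_mem hg) hg0' s (g x) h
  -- entry formula for T
  have hTentry : ∀ (s : Fin (r + 1)) (i j : Fin n),
      T s i j = if (σ' j)⁻¹ i ∈ O0 s then 1 else 0 := by
    intro s i j
    rw [hT, hO]
    have hmem : i ∈ ⇑(σ' j) '' O0 s ↔ (σ' j)⁻¹ i ∈ O0 s := by
      constructor
      · rintro ⟨y, hy, rfl⟩; simpa using hy
      · intro h; exact ⟨(σ' j)⁻¹ i, h, by simp⟩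
    by_cases h : (σ' j)⁻¹ i ∈ O0 s
    · rw [Set.indicator_of_mem (hmem.2 h), if_pos h]
    · rw [Set.indicator_of_notMem (fun hh => h (hmem.1 hh)), if_neg h]
  -- invariance of T under G
  have hTinv : ∀ (s : Fin (r + 1)) (σ : Equiv.Perm (Fin n)), σ ∈ G →
      ∀ i j : Fin n, T s (σ i) (σ j) = T s i j := by
    intro s σ hσ i j
    rw [hTentry, hTentry]
    have hτG : (σ' (σ j))⁻¹ * σ * σ' j ∈ G :=
      mul_mem (mul_mem (inv_mem (hσ'G _)) hσ) (hσ'G _)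
    have h0 : (σ' (σ j))⁻¹ (σ j) = 0 := Equiv.Perm.inv_eq_iff_eq.mpr (hσ'0 (σ j)).symm
    have hτ0 : ((σ' (σ j))⁻¹ * σ * σ' j) 0 = 0 := by
      rw [Equiv.Perm.mul_apply, Equiv.Perm.mul_apply, hσ'0 j, h0]
    have hre : (σ' (σ j))⁻¹ (σ i) = ((σ' (σ j))⁻¹ * σ * σ' j) ((σ' j)⁻¹ i) := by
      simp [Equiv.Perm.mul_apply]
    rw [hre]
    exact if_congr (hinvar _ hτG hτ0 s _).symm rfl rfl
  -- product entry formulas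
  have hPmul : ∀ (σ : Equiv.Perm (Fin n)) (f : Matrix (Fin n) (Fin n) ℂ) (i j : Fin n),
      (permMatrix σ * f) i j = f (σ⁻¹ i) j := by
    intro σ f i j
    rw [Matrix.mul_apply, Finset.sum_eq_single (σ⁻¹ i)]
    · simp [permMatrix]
    · intro k _ hk
      have : ¬ i = σ k := fun h => hk (by rw [h, show σ⁻¹ (σ k) = k from Equiv.Perm.inv_eq_iff_eq.mpr rfl])
      simp [permMatrix, this]
    · simp
  have hfmul : ∀ (σ : Equiv.Perm (Fin n)) (f : Matrix (Fin n) (Fin n) ℂ) (i j : Fin n),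
      (f * permMatrix σ) i j = f i (σ j) := by
    intro σ f i j
    rw [Matrix.mul_apply, Finset.sum_eq_single (σ j)]
    · simp [permMatrix]
    · intro k _ hk; simp [permMatrix, hk]
    · simp
  -- commuting with all P_σ iff G-invariant entries
  have hcomm_iff : ∀ f : Matrix (Fin n) (Fin n) ℂ,
      (∀ σ ∈ G, permMatrix σ * f = f * permMatrix σ) ↔
        (∀ σ ∈ G, ∀ i j : Fin n, f (σ i) (σ j) = f i j) := by
    intro f
    constructor
    · intro h σ hσ i j
      have h2 := congrFun (congrFun (h σ hσ) (σ i)) j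
      rw [hPmul, hfmul] at h2
      simpa using h2.symm
    · intro h σ hσ
      ext i j
      rw [hPmul, hfmul]
      have h2 := h σ hσ (σ⁻¹ i) j
      simpa using h2.symm
  -- entry of a linear combination
  have hsum_entry : ∀ (c : Fin (r + 1) → ℂ) (i j : Fin n) (s : Fin (r + 1)),
      (σ' j)⁻¹ i ∈ O0 s → (∑ t, c t • T t) i j = c s := by
    intro c i j s hs
    have h1 : (∑ t, c t • T t) i j = ∑ t, c t * T t i j := by
      simp [Matrix.sum_apply]
    rw [h1, Finset.sum_eq_single s]
    · rw [hTentry, if_pos hs, mul_one]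
    · intro t _ hts
      rw [hTentry, if_neg (fun ht => hts (huniq _ t s ht hs)), mul_zero]
    · simp
  -- linear independence
  have hli : LinearIndependent ℂ T := by
    rw [Fintype.linearIndependent_iff]
    intro c hc s
    obtain ⟨j, hj⟩ := hO0orbit s
    have hjs : j ∈ O0 s := hj ▸ hmem_self j
    have h2 := hsum_entry c (σ' (0 : Fin n) j) 0 s (by simpa using hjs)
    rw [hc] at h2
    simpa using h2.symm
  -- each T s is in the commutant
  have hTcomm : ∀ s : Fin (r + 1), ∀ σ ∈ G, permMatrix σ * T s = T s * permMatrix σ :=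
    fun s => (hcomm_iff (T s)).2 (hTinv s)
  -- span = commutant
  have hspan : (Submodule.span ℂ (Set.range T) : Set (Matrix (Fin n) (Fin n) ℂ)) =
      {f | ∀ σ ∈ G, permMatrix σ * f = f * permMatrix σ} := by
    ext f
    simp only [SetLike.mem_coe, Set.mem_setOf_eq]
    constructor
    · intro hf
      induction hf using Submodule.span_induction with
      | mem x hx => obtain ⟨s, rfl⟩ := hx; exact hTcomm s
      | zero => intro σ hσ; simp
      | add x y _ _ hx hy => intro σ hσ; rw [Matrix.mul_add, Matrix.add_mul, hx σ hσ, hy σ hσ]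
      | smul a x _ hx => intro σ hσ; rw [Matrix.mul_smul, Matrix.smul_mul, hx σ hσ]
    · intro hf
      have hinv' : ∀ σ ∈ G, ∀ i j : Fin n, f (σ i) (σ j) = f i j := (hcomm_iff f).1 hf
      have hfc : f = ∑ s, f (hO0orbit s).choose 0 • T s := by
        ext i j
        obtain ⟨s, hs⟩ := hcover ((σ' j)⁻¹ i)
        rw [hsum_entry _ i j s hs]
        have h1 : f i j = f ((σ' j)⁻¹ i) 0 := by
          have h2 := hinv' (σ' j) (hσ'G j) ((σ' j)⁻¹ i) 0
          rw [hσ'0 j] at h2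
          rw [← h2]
          simp
        have hjs := (hO0orbit s).choose_spec
        rw [hjs] at hs
        obtain ⟨g, hgG, hg0, hgj⟩ := hs
        have h3 := hinv' g hgG (hO0orbit s).choose 0
        rw [hg0] at h3
        rw [h1, ← hgj, h3]
      rw [hfc]
      exact Submodule.sum_mem _
        (fun s _ => Submodule.smul_mem _ _ (Submodule.subset_span ⟨s, rfl⟩))
  -- ncard of the set of orbits
  have hrange : Set.range (stabOrbit G 0) = Set.range O0 := by
    ext S
    constructor
    · rintro ⟨j, rfl⟩; obtain ⟨s, hs⟩ := hO0cover j; exact ⟨s, hs.symm⟩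
    · rintro ⟨s, rfl⟩; obtain ⟨j, hj⟩ := hO0orbit s; exact ⟨j, hj.symm⟩
  have hncard : (Set.range (stabOrbit G 0)).ncard = r + 1 := by
    rw [hrange, ← Set.image_univ, Set.ncard_image_of_injective _ hO0inj, Set.ncard_univ]
    simp
  exact ⟨hli, hspan, by simpa using finrank_span_eq_card hli, hncard⟩
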